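/- A right stochastic matrix A reaches consensus, i.e., for every x ∈ R^N, max_{i,j} |(A^t x)_i − (A^t x)_j| → 0 as t → ∞, if and only if |λ₂(A)| < 1, where λ₂(A) is the second-largest eigenvalue of A in absolute value. -/

import Mathlib

open Matrix Filter

def IsStochastic {N : ℕ} (A : Matrix (Fin N) (Fin N) ℝ) : Prop :=
  (∀ i j, 0 ≤ A i j) ∧ ∀ i, ∑ j, A i j = 1

/-- `|λ₂(A)|`: the largest modulus among the eigenvalues of `A` (with multiplicity)
after removing one copy of the eigenvalue `1`. -/
noncomputable def lam2abs {N : ℕ} (A : Matrix (Fin N) (Fin N) ℝ) : ℝ :=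
  ((((A.map (Complex.ofReal ·)).charpoly.roots).erase 1).map fun z => ‖z‖).foldr max 0

namespace ConsensusAux

open Polynomial Topology
open scoped ENNReal NNReal

attribute [local instance] Matrix.linftyOpNormedRing Matrix.linftyOpNormedAlgebra

lemma charpoly_similar {n : Type*} [Fintype n] [DecidableEq n] {R : Type*} [CommRing R]
    (T S M : Matrix n n R) (h : T * S = 1) : (T * M * S).charpoly = M.charpoly := by
  unfold Matrix.charpoly
  have hdet : (T.map C) * (S.map C) = 1 := by
    rw [← Matrix.map_mul, h]; simp
  have key : charmatrix (T * M * S) = T.map C * charmatrix M * S.map C := by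
    unfold charmatrix
    rw [Matrix.mul_sub, Matrix.sub_mul]
    congr 1
    · rw [Matrix.scalar_apply, ← Matrix.smul_one_eq_diagonal, mul_smul_comm, smul_mul_assoc,
        mul_one, hdet]
    · simp [RingHom.mapMatrix_apply, Matrix.map_mul, Matrix.mul_assoc]
  rw [key, det_mul, det_mul, mul_comm, ← mul_assoc, ← det_mul,
    mul_eq_one_comm.mp hdet, det_one, one_mul]

lemma charpoly_factor {n : ℕ} (A : Matrix (Fin (n+1)) (Fin (n+1)) ℝ)
    (hrow : ∀ i, ∑ j, A i j = 1) :
    A.charpoly = (X - C 1) *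
      (Matrix.of fun k l : Fin n => A k.succ l.succ - A 0 l.succ).charpoly := by
  classical
  let e : (Fin 1 ⊕ Fin n) ≃ Fin (n+1) :=
    { toFun := Sum.elim (fun _ => 0) Fin.succ
      invFun := fun i => Fin.cases (Sum.inl 0) (fun k => Sum.inr k) i
      left_inv := by rintro (a | k)
                     · simp [Fin.fin_one_eq_zero a]
                     · simp
      right_inv := by intro i
                      induction i using Fin.cases <;> simp }
  set a : Matrix (Fin 1) (Fin 1) ℝ := Matrix.of fun _ _ => A 0 0 with ha
  set b : Matrix (Fin 1) (Fin n) ℝ := Matrix.of fun _ l => A 0 l.succ with hb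
  set c : Matrix (Fin n) (Fin 1) ℝ := Matrix.of fun k _ => A k.succ 0 with hc
  set D : Matrix (Fin n) (Fin n) ℝ := Matrix.of fun k l => A k.succ l.succ with hD
  set w : Matrix (Fin n) (Fin 1) ℝ := Matrix.of fun _ _ => 1 with hw
  have hsub : A.submatrix e e = fromBlocks a b c D := by
    ext (i | i) (j | j) <;>
      simp [e, fromBlocks, Fin.fin_one_eq_zero, ha, hb, hc, hD]
  have habw : a + b * w = 1 := by
    ext i j
    rw [Fin.fin_one_eq_zero i, Fin.fin_one_eq_zero j]
    simp [ha, hb, hw, Matrix.mul_apply, Matrix.one_apply, ← Fin.sum_univ_succ (fun j => A 0 j),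
      hrow 0]
  have hcDw : c + D * w = w := by
    ext k j
    rw [Fin.fin_one_eq_zero j]
    simp [hc, hD, hw, Matrix.mul_apply, ← Fin.sum_univ_succ (fun j => A k.succ j),
      hrow k.succ]
  set T' : Matrix (Fin 1 ⊕ Fin n) (Fin 1 ⊕ Fin n) ℝ :=
    fromBlocks (1 : Matrix (Fin 1) (Fin 1) ℝ) (0 : Matrix (Fin 1) (Fin n) ℝ)
      (-w) (1 : Matrix (Fin n) (Fin n) ℝ) with hT'
  set S' : Matrix (Fin 1 ⊕ Fin n) (Fin 1 ⊕ Fin n) ℝ :=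
    fromBlocks (1 : Matrix (Fin 1) (Fin 1) ℝ) (0 : Matrix (Fin 1) (Fin n) ℝ)
      w (1 : Matrix (Fin n) (Fin n) ℝ) with hS'
  have hTS : T' * S' = 1 := by
    rw [hT', hS', Matrix.fromBlocks_multiply, ← Matrix.fromBlocks_one]
    congr 1 <;> simp
  have h1 : fromBlocks a b c D * S' = fromBlocks 1 b w D := by
    rw [hS', Matrix.fromBlocks_multiply]
    congr 1 <;> simp [habw, hcDw]
  have h2 : T' * (fromBlocks (1 : Matrix (Fin 1) (Fin 1) ℝ) b w D) =
      fromBlocks 1 b 0 (D - w * b) := by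
    rw [hT', Matrix.fromBlocks_multiply]
    congr 1 <;> simp [Matrix.neg_mul, sub_eq_add_neg, add_comm]
  have hwb : D - w * b = Matrix.of fun k l : Fin n => A k.succ l.succ - A 0 l.succ := by
    ext k l
    simp [hD, hw, hb, Matrix.mul_apply, Matrix.sub_apply, Fin.sum_univ_one]
  have hone : (1 : Matrix (Fin 1) (Fin 1) ℝ).charpoly = X - C 1 := by
    rw [Matrix.charpoly, Matrix.det_fin_one, charmatrix_apply_eq, Matrix.one_apply_eq]
  calc A.charpoly = (A.submatrix e e).charpoly := by
        rw [show A.submatrix e e = reindex e.symm e.symm A by simp [Matrix.reindex_apply],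
          Matrix.charpoly_reindex]
    _ = (T' * fromBlocks a b c D * S').charpoly := by
        rw [charpoly_similar _ _ _ hTS, hsub]
    _ = (fromBlocks 1 b 0 (D - w * b)).charpoly := by
        rw [Matrix.mul_assoc, h1, h2]
    _ = (X - C 1) * (Matrix.of fun k l : Fin n => A k.succ l.succ - A 0 l.succ).charpoly := by
        rw [Matrix.charpoly_fromBlocks_zero₂₁, hone, hwb]

lemma foldr_max_lt_one (s : Multiset ℝ) (h : ∀ a ∈ s, a < 1) : s.foldr max 0 < 1 := by
  induction s using Multiset.induction_on with
  | empty => simpa using one_pos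
  | cons a s ih =>
    rw [Multiset.foldr_cons]
    exact max_lt (h a (Multiset.mem_cons_self a s))
      (ih fun b hb => h b (Multiset.mem_cons_of_mem hb))

lemma le_foldr_max (s : Multiset ℝ) {a : ℝ} (h : a ∈ s) : a ≤ s.foldr max 0 := by
  induction s using Multiset.induction_on with
  | empty => simp at h
  | cons b s ih =>
    rw [Multiset.foldr_cons]
    rcases Multiset.mem_cons.mp h with rfl | hb
    · exact le_max_left _ _
    · exact le_trans (ih hb) (le_max_right _ _)

lemma eval_charpoly_det {m : ℕ} (M : Matrix (Fin m) (Fin m) ℂ) (μ : ℂ) :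
    M.charpoly.eval μ = (Matrix.diagonal (fun _ : Fin m => μ) - M).det := by
  rw [Matrix.charpoly, show (Polynomial.eval μ : ℂ[X] → ℂ) = Polynomial.evalRingHom μ from rfl,
    RingHom.map_det]
  congr 1
  ext i j
  by_cases hij : i = j
  · subst hij; simp
  · simp [Matrix.charmatrix_apply_ne _ _ _ hij, Matrix.diagonal_apply_ne _ hij]

lemma spectrum_isRoot {m : ℕ} (M : Matrix (Fin m) (Fin m) ℂ) {μ : ℂ}
    (h : μ ∈ spectrum ℂ M) : M.charpoly.IsRoot μ := by
  rw [spectrum.mem_iff] at h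
  have hdet : (Matrix.diagonal (fun _ : Fin m => μ) - M).det = 0 := by
    by_contra hd
    apply h
    rw [show (algebraMap ℂ (Matrix (Fin m) (Fin m) ℂ)) μ = Matrix.diagonal fun _ => μ by
      simp [Matrix.algebraMap_eq_diagonal]]
    exact (Matrix.isUnit_iff_isUnit_det _).mpr (isUnit_iff_ne_zero.mpr hd)
  rw [Polynomial.IsRoot, eval_charpoly_det, hdet]

lemma tendsto_pow_norm_zero_of_spectralRadius_lt_one {A : Type*} [NormedRing A]
    [NormedAlgebra ℂ A] [CompleteSpace A] {a : A} (h : spectralRadius ℂ a < 1) :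
    Tendsto (fun t : ℕ => ‖a ^ t‖) atTop (nhds 0) := by
  obtain ⟨r, hr1, hr2⟩ := ENNReal.lt_iff_exists_nnreal_btwn.mp h
  have hgel := spectrum.pow_nnnorm_pow_one_div_tendsto_nhds_spectralRadius a
  have hev : ∀ᶠ t : ℕ in atTop, (‖a ^ t‖₊ : ℝ≥0∞) ^ (1 / (t : ℝ)) < (r : ℝ≥0∞) :=
    hgel.eventually_lt_const hr1
  have key : ∀ᶠ t : ℕ in atTop, ‖a ^ t‖ ≤ (r : ℝ) ^ t := by
    filter_upwards [hev, eventually_ge_atTop 1] with t ht ht1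
    have htne : (t : ℝ) ≠ 0 := by positivity
    have h2 := ENNReal.rpow_lt_rpow ht (by positivity : (0:ℝ) < (t : ℝ))
    rw [← ENNReal.rpow_mul, one_div, inv_mul_cancel₀ htne, ENNReal.rpow_one,
      ENNReal.rpow_natCast, ← ENNReal.coe_pow] at h2
    have h3 : ‖a ^ t‖₊ < r ^ t := ENNReal.coe_lt_coe.mp h2
    calc ‖a ^ t‖ ≤ ((r ^ t : ℝ≥0) : ℝ) := le_of_lt h3
      _ = (r : ℝ) ^ t := by push_cast; ring
  have hr1' : (r : ℝ) < 1 := by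
    have : (r : ℝ≥0∞) < ((1 : ℝ≥0) : ℝ≥0∞) := by simpa using hr2
    exact_mod_cast ENNReal.coe_lt_coe.mp this
  exact squeeze_zero' (Eventually.of_forall fun t => norm_nonneg _) key
    (tendsto_pow_atTop_nhds_zero_of_lt_one r.coe_nonneg hr1')

lemma entry_le_linfty {m : ℕ} (M : Matrix (Fin m) (Fin m) ℂ) (k l : Fin m) :
    ‖M k l‖ ≤ ‖M‖ := by
  rw [Matrix.linfty_opNorm_def]
  have h1 : ‖M k l‖₊ ≤ ∑ j, ‖M k j‖₊ :=
    Finset.single_le_sum (f := fun j => ‖M k j‖₊) (fun j _ => zero_le) (Finset.mem_univ l)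
  have h2 : (∑ j, ‖M k j‖₊) ≤ Finset.univ.sup fun i => ∑ j, ‖M i j‖₊ :=
    Finset.le_sup (f := fun i => ∑ j, ‖M i j‖₊) (Finset.mem_univ k)
  exact_mod_cast le_trans h1 h2

lemma step {n : ℕ} (A : Matrix (Fin (n+1)) (Fin (n+1)) ℝ)
    (hrow : ∀ i, ∑ j, A i j = 1) (x : Fin (n+1) → ℝ) (k : Fin n) :
    A.mulVec x k.succ - A.mulVec x 0 =
      (Matrix.of fun k l : Fin n => A k.succ l.succ - A 0 l.succ).mulVec
        (fun j => x j.succ - x 0) k := by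
  have h1 : A.mulVec x k.succ - A.mulVec x 0
      = ∑ j, (A k.succ j - A 0 j) * (x j - x 0) := by
    simp only [Matrix.mulVec, dotProduct, sub_mul, mul_sub]
    rw [Finset.sum_sub_distrib, Finset.sum_sub_distrib, Finset.sum_sub_distrib]
    have e1 : ∑ j, A k.succ j * x 0 = 1 * x 0 := by rw [← Finset.sum_mul, hrow]
    have e2 : ∑ j, A 0 j * x 0 = 1 * x 0 := by rw [← Finset.sum_mul, hrow]
    rw [e1, e2]
    ring
  rw [h1, Fin.sum_univ_succ]
  simp [Matrix.mulVec, dotProduct]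

lemma iterate {n : ℕ} (A : Matrix (Fin (n+1)) (Fin (n+1)) ℝ)
    (hrow : ∀ i, ∑ j, A i j = 1) (x : Fin (n+1) → ℝ) (t : ℕ) :
    ∀ k : Fin n, (A ^ t).mulVec x k.succ - (A ^ t).mulVec x 0 =
      ((Matrix.of fun k l : Fin n => A k.succ l.succ - A 0 l.succ) ^ t).mulVec
        (fun j => x j.succ - x 0) k := by
  induction t with
  | zero => intro k; simp [Matrix.one_mulVec]
  | succ t ih =>
    intro k
    have hy : ((A ^ (t+1)).mulVec x) = A.mulVec ((A ^ t).mulVec x) := by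
      rw [pow_succ', ← Matrix.mulVec_mulVec]
    rw [hy, step A hrow ((A ^ t).mulVec x) k]
    have hd : (fun j : Fin n => (A ^ t).mulVec x j.succ - (A ^ t).mulVec x 0)
        = ((Matrix.of fun k l : Fin n => A k.succ l.succ - A 0 l.succ) ^ t).mulVec
            (fun j => x j.succ - x 0) := funext fun j => ih j
    rw [hd, Matrix.mulVec_mulVec, ← pow_succ']

end ConsensusAux

attribute [local instance] Matrix.linftyOpNormedRing Matrix.linftyOpNormedAlgebra

/-- Necessary and sufficient condition in the deterministic case:
a right stochastic matrix `A` reaches consensus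
(`max_{i,j} |(A^t x)_i - (A^t x)_j| → 0` for all `x`) iff `|λ₂(A)| < 1`. -/
theorem deterministic_consensus_iff_lam2_lt_one {N : ℕ} (hN : 0 < N)
    (A : Matrix (Fin N) (Fin N) ℝ) (hA : IsStochastic A) :
    (∀ x : Fin N → ℝ,
        Tendsto (fun t : ℕ => ⨆ i, ⨆ j, |(A ^ t).mulVec x i - (A ^ t).mulVec x j|)
          atTop (nhds 0)) ↔
      lam2abs A < 1 := by
  classical
  open ConsensusAux Polynomial in
  obtain ⟨n, rfl⟩ : ∃ n, N = n + 1 := ⟨N - 1, by omega⟩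
  obtain ⟨hpos, hrow⟩ := hA
  set Cm : Matrix (Fin n) (Fin n) ℝ :=
    Matrix.of fun k l => A k.succ l.succ - A 0 l.succ with hCmdef
  set Mc : Matrix (Fin n) (Fin n) ℂ := Cm.map (Complex.ofReal ·) with hMcdef
  have hmapMc : Mc = Complex.ofRealHom.mapMatrix Cm := rfl
  set L : ℝ := ((Mc.charpoly.roots).map fun z => ‖z‖).foldr max 0 with hLdef
  -- powers of Mc are maps of powers of Cm
  have hMcpow : ∀ t : ℕ, Mc ^ t = (Cm ^ t).map (Complex.ofReal ·) := by
    intro t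
    rw [hmapMc, ← map_pow]
    rfl
  -- lam2abs A = L
  have hfac : (A.map (Complex.ofReal ·)).charpoly = (X - C 1) * Mc.charpoly := by
    have h1 : A.map (Complex.ofReal ·) = Complex.ofRealHom.mapMatrix A := rfl
    rw [h1, RingHom.mapMatrix_apply, Matrix.charpoly_map, charpoly_factor A hrow,
      Polynomial.map_mul, hmapMc, RingHom.mapMatrix_apply, Matrix.charpoly_map, ← hCmdef]
    congr 1
    simp
  have hlam : lam2abs A = L := by
    rw [lam2abs, hfac, Polynomial.roots_mul
      (mul_ne_zero (X_sub_C_ne_zero 1) (Matrix.charpoly_monic Mc).ne_zero),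
      Polynomial.roots_X_sub_C, Multiset.singleton_add, Multiset.erase_cons_head, hLdef]
  rw [hlam]
  -- the "difference" dynamics
  have hiter : ∀ (x : Fin (n+1) → ℝ) (t : ℕ) (k : Fin n),
      (A ^ t).mulVec x k.succ - (A ^ t).mulVec x 0 =
        (Cm ^ t).mulVec (fun j => x j.succ - x 0) k := by
    intro x t k
    exact iterate A hrow x t k
  have bddAb : ∀ (f : Fin (n+1) → ℝ), BddAbove (Set.range f) :=
    fun f => (Set.finite_range f).bddAbove
  constructor
  · -- consensus → L < 1
    intro hcons
    -- entries of Cm ^ t tend to zero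
    have hent : ∀ k j : Fin n, Tendsto (fun t : ℕ => (Cm ^ t) k j) atTop (nhds 0) := by
      intro k j
      set x : Fin (n+1) → ℝ := fun i => if i = j.succ then 1 else 0 with hxdef
      have h0 : x 0 = (0:ℝ) := by
        rw [hxdef]; exact if_neg (Ne.symm (Fin.succ_ne_zero j))
      have hdx : (fun l : Fin n => x l.succ - x 0) = fun l => if l = j then 1 else 0 := by
        funext l
        rw [h0, sub_zero, hxdef]
        simp [Fin.succ_inj]
      refine squeeze_zero_norm (fun t => ?_) (hcons x)
      · have he : (Cm ^ t) k j = (A ^ t).mulVec x k.succ - (A ^ t).mulVec x 0 := by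
          rw [hiter x t k, hdx]
          simp [Matrix.mulVec, dotProduct]
        rw [Real.norm_eq_abs, he]
        calc |(A ^ t).mulVec x k.succ - (A ^ t).mulVec x 0|
            ≤ ⨆ i', |(A ^ t).mulVec x k.succ - (A ^ t).mulVec x i'| :=
              le_ciSup (f := fun i' => |(A ^ t).mulVec x k.succ - (A ^ t).mulVec x i'|)
                (bddAb _) 0
          _ ≤ ⨆ i, ⨆ i', |(A ^ t).mulVec x i - (A ^ t).mulVec x i'| :=
              le_ciSup (f := fun i => ⨆ i', |(A ^ t).mulVec x i - (A ^ t).mulVec x i'|)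
                (bddAb _) k.succ
    -- every root has modulus < 1
    have hroots : ∀ z ∈ Mc.charpoly.roots, ‖z‖ < 1 := by
      intro z hz
      by_contra hge
      push_neg at hge
      have hz' : Mc.charpoly.IsRoot z := isRoot_of_mem_roots hz
      have hdet : (Matrix.diagonal (fun _ : Fin n => z) - Mc).det = 0 := by
        rw [← eval_charpoly_det]; exact hz'
      obtain ⟨v, hv0, hv⟩ := (Matrix.exists_mulVec_eq_zero_iff).mpr hdet
      have heig : Mc.mulVec v = z • v := by
        funext i
        have := congrFun hv i
        rw [Matrix.sub_mulVec] at this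
        have h2 : Matrix.mulVec (Matrix.diagonal fun _ => z) v i = z * v i := by
          rw [Matrix.mulVec_diagonal]
        simp only [Pi.sub_apply, h2] at this
        have := sub_eq_zero.mp this
        simp [Pi.smul_apply, smul_eq_mul, ← this]
      have hpowv : ∀ t : ℕ, (Mc ^ t).mulVec v = (z ^ t) • v := by
        intro t
        induction t with
        | zero => simp [Matrix.one_mulVec]
        | succ t ih =>
          rw [pow_succ', ← Matrix.mulVec_mulVec, ih, Matrix.mulVec_smul, heig, smul_smul,
            ← pow_succ]
      obtain ⟨i0, hi0⟩ := Function.ne_iff.mp hv0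
      have hub : ∀ t : ℕ, ‖v i0‖ ≤ ∑ l, |(Cm ^ t) i0 l| * ‖v l‖ := by
        intro t
        have h1 : ‖((Mc ^ t).mulVec v) i0‖ = ‖z‖ ^ t * ‖v i0‖ := by
          rw [hpowv t]
          simp [norm_smul, norm_pow]
        have h2 : ‖((Mc ^ t).mulVec v) i0‖ ≤ ∑ l, |(Cm ^ t) i0 l| * ‖v l‖ := by
          rw [Matrix.mulVec, dotProduct]
          refine le_trans (norm_sum_le _ _) (Finset.sum_le_sum fun l _ => ?_)
          rw [hMcpow t]
          simp only [Matrix.map_apply]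
          rw [norm_mul, Complex.norm_real, Real.norm_eq_abs]
        calc ‖v i0‖ = 1 * ‖v i0‖ := (one_mul _).symm
          _ ≤ ‖z‖ ^ t * ‖v i0‖ := by
              have : (1:ℝ) ≤ ‖z‖ ^ t := one_le_pow₀ hge
              exact mul_le_mul_of_nonneg_right this (norm_nonneg _)
          _ = ‖((Mc ^ t).mulVec v) i0‖ := h1.symm
          _ ≤ _ := h2
      have hsum0 : Tendsto (fun t : ℕ => ∑ l, |(Cm ^ t) i0 l| * ‖v l‖) atTop (nhds 0) := by
        have : Tendsto (fun t : ℕ => ∑ l, |(Cm ^ t) i0 l| * ‖v l‖) atTop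
            (nhds (∑ l : Fin n, 0)) := by
          refine tendsto_finset_sum _ fun l _ => ?_
          have h0 : Tendsto (fun t : ℕ => |(Cm ^ t) i0 l|) atTop (nhds 0) := by
            have := (hent i0 l).norm
            simpa [Real.norm_eq_abs] using this
          simpa using h0.mul_const (‖v l‖)
        simpa using this
      have : ‖v i0‖ ≤ 0 := ge_of_tendsto hsum0 (Eventually.of_forall hub)
      exact hi0 (norm_le_zero_iff.mp this)
    exact foldr_max_lt_one _ (by
      intro a ha
      obtain ⟨z, hz, rfl⟩ := Multiset.mem_map.mp ha
      exact hroots z hz)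
  · -- L < 1 → consensus
    intro hL x
    have hρ : spectralRadius ℂ Mc < 1 := by
      have hub : spectralRadius ℂ Mc ≤ ENNReal.ofReal L := by
        rw [spectralRadius]
        refine iSup₂_le fun μ hμ => ?_
        have hroot := spectrum_isRoot Mc hμ
        have hmem : μ ∈ Mc.charpoly.roots := by
          rw [Polynomial.mem_roots (Matrix.charpoly_monic Mc).ne_zero]
          exact hroot
        have hle : ‖μ‖ ≤ L :=
          le_foldr_max _ (Multiset.mem_map_of_mem _ hmem)
        calc (‖μ‖₊ : ENNReal) = ENNReal.ofReal ‖μ‖ := (ofReal_norm μ).symm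
          _ ≤ ENNReal.ofReal L := ENNReal.ofReal_le_ofReal hle
      exact lt_of_le_of_lt hub (ENNReal.ofReal_lt_one.mpr hL)
    have hnorm0 : Tendsto (fun t : ℕ => ‖Mc ^ t‖) atTop (nhds 0) :=
      tendsto_pow_norm_zero_of_spectralRadius_lt_one hρ
    have hent : ∀ k l : Fin n, Tendsto (fun t : ℕ => (Cm ^ t) k l) atTop (nhds 0) := by
      intro k l
      refine squeeze_zero_norm (fun t => ?_) hnorm0
      have h1 : ‖(Mc ^ t) k l‖ ≤ ‖Mc ^ t‖ := entry_le_linfty _ k l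
      have h2 : (Mc ^ t) k l = ((Cm ^ t) k l : ℂ) := by rw [hMcpow t]; rfl
      rw [h2, Complex.norm_real, Real.norm_eq_abs] at h1
      simpa [Real.norm_eq_abs] using h1
    set dx : Fin n → ℝ := fun j => x j.succ - x 0 with hdxdef
    have hD0 : ∀ k : Fin n, Tendsto (fun t : ℕ => (Cm ^ t).mulVec dx k) atTop (nhds 0) := by
      intro k
      have : Tendsto (fun t : ℕ => ∑ l, (Cm ^ t) k l * dx l) atTop (nhds (∑ l : Fin n, 0)) :=
        tendsto_finset_sum _ fun l _ => by simpa using (hent k l).mul_const (dx l)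
      simpa [Matrix.mulVec, dotProduct] using this
    have hsum0 : Tendsto (fun t : ℕ => 2 * ∑ l, |(Cm ^ t).mulVec dx l|) atTop (nhds 0) := by
      have h1 : Tendsto (fun t : ℕ => ∑ l, |(Cm ^ t).mulVec dx l|) atTop
          (nhds (∑ l : Fin n, 0)) := by
        refine tendsto_finset_sum _ fun l _ => ?_
        have := (hD0 l).norm
        simpa [Real.norm_eq_abs] using this
      have h2 := h1.const_mul 2
      simpa using h2
    refine tendsto_of_tendsto_of_tendsto_of_le_of_le (tendsto_const_nhds) hsum0
      (fun t => ?_) (fun t => ?_)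
    · -- 0 ≤ sup
      calc (0:ℝ) = |(A ^ t).mulVec x 0 - (A ^ t).mulVec x 0| := by simp
        _ ≤ ⨆ i', |(A ^ t).mulVec x 0 - (A ^ t).mulVec x i'| :=
            le_ciSup (f := fun i' => |(A ^ t).mulVec x 0 - (A ^ t).mulVec x i'|) (bddAb _) 0
        _ ≤ ⨆ i, ⨆ i', |(A ^ t).mulVec x i - (A ^ t).mulVec x i'| :=
            le_ciSup (f := fun i => ⨆ i', |(A ^ t).mulVec x i - (A ^ t).mulVec x i'|)
              (bddAb _) 0
    · -- sup ≤ 2 * sum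
      have hone : ∀ i : Fin (n+1),
          |(A ^ t).mulVec x i - (A ^ t).mulVec x 0| ≤ ∑ l, |(Cm ^ t).mulVec dx l| := by
        intro i
        induction i using Fin.cases with
        | zero =>
          simpa using Finset.sum_nonneg fun (l : Fin n) (_ : l ∈ Finset.univ) =>
            abs_nonneg ((Cm ^ t).mulVec dx l)
        | succ k =>
          rw [hiter x t k]
          exact Finset.single_le_sum (f := fun l => |(Cm ^ t).mulVec dx l|)
            (fun l _ => abs_nonneg _) (Finset.mem_univ k)
      refine ciSup_le fun i => ciSup_le fun i' => ?_
      calc |(A ^ t).mulVec x i - (A ^ t).mulVec x i'|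
          ≤ |(A ^ t).mulVec x i - (A ^ t).mulVec x 0| +
            |(A ^ t).mulVec x i' - (A ^ t).mulVec x 0| := by
            rw [abs_sub_comm ((A ^ t).mulVec x i') ((A ^ t).mulVec x 0)]
            exact abs_sub_le _ _ _
        _ ≤ (∑ l, |(Cm ^ t).mulVec dx l|) + (∑ l, |(Cm ^ t).mulVec dx l|) :=
            add_le_add (hone i) (hone i')
        _ = 2 * ∑ l, |(Cm ^ t).mulVec dx l| := by ring
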